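/- For every n ∈ ℕ, every 2^n × 2^n complex matrix A, and every subspace S ⊆ 𝔽₂^{2n}, the Pauli projection equals the Pauli twirl over the symplectic complement: Π_S(A) = (1/|S^⊥|) · Σ_{q ∈ S^⊥} W_q · A · W_q†. (The paper states this for unitary A; its proof gives it for all operators by linearity.) -/

import Mathlib

open scoped Kronecker Classical Matrix

namespace PauliSpec

/-- The field 𝔽₂. -/
abbrev F2 := ZMod 2

/-- The phase space 𝔽₂^{2n}, identified with pairs `(xX, xZ) ∈ 𝔽₂^n × 𝔽₂^n`. -/
abbrev PhS (n : ℕ) := (Fin n → F2) × (Fin n → F2)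

/-- Index type for `n`-qubit matrices: ℂ^{2^n} ≅ ⊗_{j=1}^n ℂ². -/
abbrev QIdx (n : ℕ) := Fin n → Fin 2

/-- The 2×2 Pauli X matrix. -/
def PauliX : Matrix (Fin 2) (Fin 2) ℂ := !![0, 1; 1, 0]

/-- The 2×2 Pauli Y matrix. -/
def PauliY : Matrix (Fin 2) (Fin 2) ℂ := !![0, -Complex.I; Complex.I, 0]

/-- The 2×2 Pauli Z matrix. -/
def PauliZ : Matrix (Fin 2) (Fin 2) ℂ := !![1, 0; 0, -1]

/-- The Weyl operator `W_x := i^{xX·xZ} ⊗_j (X^{xX_j} Z^{xZ_j})`, written entrywise: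
the `(u, v)` entry of the `n`-fold Kronecker product of matrices `M_j` is `∏_j (M_j)_{u_j v_j}`. -/
noncomputable def Weyl {n : ℕ} (x : PhS n) : Matrix (QIdx n) (QIdx n) ℂ :=
  fun u v =>
    (Complex.I ^ (∑ j, (x.1 j).val * (x.2 j).val)) *
      ∏ j, (PauliX ^ (x.1 j).val * PauliZ ^ (x.2 j).val) (u j) (v j)

/-- The symplectic product `[x,y] := ∑_j (xX_j·yZ_j + xZ_j·yX_j) ∈ 𝔽₂`. -/
def sympl {n : ℕ} (x y : PhS n) : F2 :=
  ∑ j, (x.1 j * y.2 j + x.2 j * y.1 j)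

lemma sympl_add_left {n : ℕ} (x y z : PhS n) :
    sympl (x + y) z = sympl x z + sympl y z := by
  simp only [sympl, Prod.fst_add, Prod.snd_add, Pi.add_apply, add_mul]
  rw [← Finset.sum_add_distrib]
  exact Finset.sum_congr rfl fun j _ => by ring

lemma sympl_smul_left {n : ℕ} (c : F2) (x z : PhS n) :
    sympl (c • x) z = c * sympl x z := by
  simp only [sympl, Prod.smul_fst, Prod.smul_snd, Pi.smul_apply, smul_eq_mul, Finset.mul_sum]
  exact Finset.sum_congr rfl fun j _ => by ring

/-- The symplectic complement `S^⊥ := {x : [x,y] = 0 for all y ∈ S}`. -/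
def symplComplement {n : ℕ} (S : Submodule F2 (PhS n)) : Submodule F2 (PhS n) where
  carrier := {x | ∀ y ∈ S, sympl x y = 0}
  add_mem' := by
    intro a b ha hb y hy
    rw [sympl_add_left, ha y hy, hb y hy, add_zero]
  zero_mem' := by
    intro y hy
    simp [sympl]
  smul_mem' := by
    intro c x hx y hy
    rw [sympl_smul_left, hx y hy, mul_zero]

/-- The Pauli support `supp(A) := {x : tr(W_x·A) ≠ 0}`. -/
noncomputable def pauliSupport {n : ℕ} (A : Matrix (QIdx n) (QIdx n) ℂ) : Set (PhS n) :=
  {x | (Weyl x * A).trace ≠ 0}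

/-- The Pauli projection `Π_S(A) := 2^{−n} ∑_{x∈S} tr(A·W_x)·W_x`. -/
noncomputable def pauliProj {n : ℕ} (S : Set (PhS n)) (A : Matrix (QIdx n) (QIdx n) ℂ) :
    Matrix (QIdx n) (QIdx n) ℂ :=
  (2 ^ n : ℂ)⁻¹ • ∑ᶠ x ∈ S, (A * Weyl x).trace • Weyl x

/-- The subspace `𝒲_{a,b} ⊆ 𝔽₂^{2n}`: `xX_j = 0` on the first `n−a` coordinates and
`xZ_j = 0` on the first `n−a−b` coordinates. -/
def Wab (n a b : ℕ) : Submodule F2 (PhS n) where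
  carrier := {x | (∀ j : Fin n, (j : ℕ) < n - a → x.1 j = 0) ∧
    ∀ j : Fin n, (j : ℕ) < n - a - b → x.2 j = 0}
  add_mem' := by
    rintro x y ⟨hx1, hx2⟩ ⟨hy1, hy2⟩
    refine ⟨fun j hj => ?_, fun j hj => ?_⟩
    · simp [Prod.fst_add, Pi.add_apply, hx1 j hj, hy1 j hj]
    · simp [Prod.snd_add, Pi.add_apply, hx2 j hj, hy2 j hj]
  zero_mem' := ⟨fun j _ => rfl, fun j _ => rfl⟩
  smul_mem' := by
    rintro c x ⟨hx1, hx2⟩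
    refine ⟨fun j hj => ?_, fun j hj => ?_⟩
    · simp [Prod.smul_fst, Pi.smul_apply, hx1 j hj]
    · simp [Prod.smul_snd, Pi.smul_apply, hx2 j hj]

/-- `A` is `(a,b)`-block-diagonal: under ℂ^{2^n} ≅ ℂ^{2^{n−a−b}} ⊗ ℂ^{2^b} ⊗ ℂ^{2^a},
`A = I ⊗ (∑_{y∈{0,1}^b} |y⟩⟨y| ⊗ A_y)`.  Entrywise: `A u v = 0` unless `u, v` agree on the
first `n−a` coordinates, and then the entry is `A_{u₂}(u₃, v₃)` where `u₂` is the middle `b`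
coordinates and `u₃, v₃` the last `a` coordinates. -/
def IsBlockDiag {n : ℕ} (a b : ℕ) (hab : a + b ≤ n)
    (A : Matrix (QIdx n) (QIdx n) ℂ) : Prop :=
  ∃ M : (Fin b → Fin 2) → Matrix (Fin a → Fin 2) (Fin a → Fin 2) ℂ,
    ∀ u v : QIdx n,
      A u v =
        if ∀ j : Fin n, (j : ℕ) < n - a → u j = v j then
          M (fun i => u ⟨n - a - b + i.1, by have := i.2; omega⟩)
            (fun i => u ⟨n - a + i.1, by have := i.2; omega⟩)
            (fun i => v ⟨n - a + i.1, by have := i.2; omega⟩)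
        else 0

/-- The ℓ² → ℓ² operator norm of a complex matrix. -/
noncomputable def l2OpNorm {ι κ : Type*} [Fintype ι] [Fintype κ] [DecidableEq κ]
    (A : Matrix ι κ ℂ) : ℝ :=
  ‖LinearMap.toContinuousLinearMap (Matrix.toEuclideanLin A)‖

/-- `C` is a Clifford unitary: it is unitary and conjugates every Weyl operator to a
signed Weyl operator. -/
def IsCliffordUnitary {n : ℕ} (C : Matrix (QIdx n) (QIdx n) ℂ) : Prop :=
  C ∈ Matrix.unitaryGroup (QIdx n) ℂ ∧
    ∀ x : PhS n, ∃ (y : PhS n) (s : ℂ), (s = 1 ∨ s = -1) ∧ C * Weyl x * Cᴴ = s • Weyl y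

/-- `C T C† := {y : ∃ x ∈ T, C·W_x·C† = ±W_y}`. -/
def conjSet {n : ℕ} (C : Matrix (QIdx n) (QIdx n) ℂ) (T : Set (PhS n)) : Set (PhS n) :=
  {y | ∃ x ∈ T, ∃ s : ℂ, (s = 1 ∨ s = -1) ∧ C * Weyl x * Cᴴ = s • Weyl y}

/-- The matrix acting as the 2×2 matrix `P` on qubit `i` and as the identity elsewhere:
`P_i := I^{⊗(i−1)} ⊗ P ⊗ I^{⊗(n−i)}`. -/
def onQubit {n : ℕ} (P : Matrix (Fin 2) (Fin 2) ℂ) (i : Fin n) :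
    Matrix (QIdx n) (QIdx n) ℂ :=
  fun u v => if ∀ j : Fin n, j ≠ i → u j = v j then P (u i) (v i) else 0

/-- The unitary on `2n` qubits exchanging the `i`-th qubit of the first group of `n`
qubits with the `i`-th qubit of the second group. -/
def swapQubit {n : ℕ} (i : Fin n) :
    Matrix (QIdx n × QIdx n) (QIdx n × QIdx n) ℂ :=
  fun p q =>
    if p.1 = Function.update q.1 i (q.2 i) ∧ p.2 = Function.update q.2 i (q.1 i) then 1 else 0

noncomputable def W1 (a b : F2) : Matrix (Fin 2) (Fin 2) ℂ := PauliX ^ a.val * PauliZ ^ b.val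

lemma F2cases (a : F2) : a = 0 ∨ a = 1 := by revert a; decide

lemma val0 : (0:F2).val = 0 := rfl

lemma val1 : (1:F2).val = 1 := rfl

lemma F2cast (a : F2) : ((a.val : ℕ) : F2) = a := by revert a; decide

lemma sum_pi_prod {κ α : Type*} [Fintype κ] [DecidableEq κ] [Fintype α] [DecidableEq α]
    (f : κ → α → ℂ) :
    ∑ w : κ → α, ∏ j : κ, f j (w j) = ∏ j : κ, ∑ c : α, f j c := by
  rw [Finset.prod_univ_sum, ← Fintype.piFinset_univ]

lemma neg_one_pow_F2 (m : ℕ) : ((-1:ℂ))^m = (-1)^((m : F2).val) := by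
  rcases Nat.even_or_odd m with h | h
  · rw [h.neg_one_pow]
    have : ((m : F2)) = 0 := by
      obtain ⟨k, rfl⟩ := h; push_cast; rw [← two_mul, show ((2:F2)) = 0 by decide]; ring
    rw [this, val0, pow_zero]
  · rw [h.neg_one_pow]
    have : ((m : F2)) = 1 := by
      obtain ⟨k, rfl⟩ := h; push_cast; rw [show ((2:F2)) = 0 by decide]; ring
    rw [this, val1, pow_one]

-- 2x2 lemmas

lemma comm1 (a b c d : F2) : W1 a b * W1 c d = ((-1:ℂ))^(b.val*c.val + d.val*a.val) • (W1 c d * W1 a b) := by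
  rcases F2cases a with rfl|rfl <;> rcases F2cases b with rfl|rfl <;>
  rcases F2cases c with rfl|rfl <;> rcases F2cases d with rfl|rfl <;>
    · simp only [W1, val0, val1, pow_zero, pow_one, PauliX, PauliZ]
      ext i j; fin_cases i <;> fin_cases j <;> simp [Matrix.mul_apply, Fin.sum_univ_two]

lemma sq1 (a b : F2) : W1 a b * W1 a b = ((-1:ℂ))^(a.val*b.val) • 1 := by
  rcases F2cases a with rfl|rfl <;> rcases F2cases b with rfl|rfl <;>
    · simp only [W1, val0, val1, pow_zero, pow_one, PauliX, PauliZ]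
      ext i j; fin_cases i <;> fin_cases j <;> simp [Matrix.mul_apply, Fin.sum_univ_two, Matrix.one_apply]

lemma transp1 (a b : F2) (u v : Fin 2) : W1 a b v u = ((-1:ℂ))^(a.val*b.val) * W1 a b u v := by
  rcases F2cases a with rfl|rfl <;> rcases F2cases b with rfl|rfl <;>
    · simp only [W1, val0, val1, pow_zero, pow_one, PauliX, PauliZ]
      fin_cases u <;> fin_cases v <;> simp [Matrix.mul_apply, Fin.sum_univ_two]

lemma real1 (a b : F2) (u v : Fin 2) : (starRingEnd ℂ) (W1 a b u v) = W1 a b u v := by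
  rcases F2cases a with rfl|rfl <;> rcases F2cases b with rfl|rfl <;>
    · simp only [W1, val0, val1, pow_zero, pow_one, PauliX, PauliZ]
      fin_cases u <;> fin_cases v <;> simp [Matrix.mul_apply, Fin.sum_univ_two]

lemma tr1 (a b c d : F2) : ∑ u : Fin 2, (W1 a b * W1 c d) u u
    = if a = c ∧ b = d then 2 * ((-1:ℂ))^(a.val*b.val) else 0 := by
  rcases F2cases a with rfl|rfl <;> rcases F2cases b with rfl|rfl <;>
  rcases F2cases c with rfl|rfl <;> rcases F2cases d with rfl|rfl <;>
    · simp only [W1, val0, val1, pow_zero, pow_one, PauliX, PauliZ]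
      norm_num [Matrix.mul_apply, Fin.sum_univ_two]

lemma complete1 (t s u v : Fin 2) :
    ∑ a : F2, ∑ b : F2, ((-1:ℂ))^(a.val*b.val) * (W1 a b t s * W1 a b u v)
    = if t = v ∧ s = u then 2 else 0 := by
  have huniv : (Finset.univ : Finset F2) = {0, 1} := by decide
  rw [huniv]
  fin_cases t <;> fin_cases s <;> fin_cases u <;> fin_cases v <;>
    · simp only [Finset.sum_insert, Finset.mem_singleton, Finset.sum_singleton]
      norm_num [W1, val0, val1, PauliX, PauliZ]

-- Weyl-level

lemma Weyl_apply {n : ℕ} (x : PhS n) (u v : QIdx n) :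
    Weyl x u v = (Complex.I ^ (∑ j, (x.1 j).val * (x.2 j).val)) *
      ∏ j, W1 (x.1 j) (x.2 j) (u j) (v j) := rfl

lemma Weyl_mul_apply {n : ℕ} (x y : PhS n) (u v : QIdx n) :
    (Weyl x * Weyl y) u v =
      (Complex.I ^ (∑ j, (x.1 j).val * (x.2 j).val)) *
      (Complex.I ^ (∑ j, (y.1 j).val * (y.2 j).val)) *
      ∏ j, (W1 (x.1 j) (x.2 j) * W1 (y.1 j) (y.2 j)) (u j) (v j) := by
  rw [Matrix.mul_apply]
  simp only [Weyl_apply]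
  have h1 : ∀ w : QIdx n,
      (Complex.I ^ (∑ j, (x.1 j).val * (x.2 j).val) * ∏ j, W1 (x.1 j) (x.2 j) (u j) (w j)) *
      (Complex.I ^ (∑ j, (y.1 j).val * (y.2 j).val) * ∏ j, W1 (y.1 j) (y.2 j) (w j) (v j))
      = (Complex.I ^ (∑ j, (x.1 j).val * (x.2 j).val)) *
        (Complex.I ^ (∑ j, (y.1 j).val * (y.2 j).val)) *
        ∏ j, (W1 (x.1 j) (x.2 j) (u j) (w j) * W1 (y.1 j) (y.2 j) (w j) (v j)) := by
    intro w; rw [Finset.prod_mul_distrib]; ring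
  rw [Finset.sum_congr rfl fun w _ => h1 w, ← Finset.mul_sum]
  congr 1
  rw [sum_pi_prod (f := fun j c => W1 (x.1 j) (x.2 j) (u j) c * W1 (y.1 j) (y.2 j) c (v j))]
  exact (Finset.prod_congr rfl fun j _ => (Matrix.mul_apply ..)).symm

lemma sign_prod {n : ℕ} (q x : PhS n) :
    ∏ j, ((-1:ℂ))^((q.2 j).val*(x.1 j).val + (x.2 j).val*(q.1 j).val)
      = ((-1:ℂ))^((sympl q x).val) := by
  rw [Finset.prod_pow_eq_pow_sum, neg_one_pow_F2]
  have : ((∑ j, ((q.2 j).val*(x.1 j).val + (x.2 j).val*(q.1 j).val) : ℕ) : F2) = sympl q x := by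
    push_cast [F2cast]
    simp only [sympl]
    exact Finset.sum_congr rfl fun j _ => by ring
  rw [this]

lemma Weyl_comm {n : ℕ} (q x : PhS n) :
    Weyl q * Weyl x = ((-1:ℂ))^((sympl q x).val) • (Weyl x * Weyl q) := by
  ext u v
  rw [Matrix.smul_apply, Weyl_mul_apply, Weyl_mul_apply]
  have h1 : ∀ j : Fin n, (W1 (q.1 j) (q.2 j) * W1 (x.1 j) (x.2 j)) (u j) (v j)
      = ((-1:ℂ))^((q.2 j).val*(x.1 j).val + (x.2 j).val*(q.1 j).val) *
        (W1 (x.1 j) (x.2 j) * W1 (q.1 j) (q.2 j)) (u j) (v j) := by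
    intro j; rw [comm1]; rfl
  rw [Finset.prod_congr rfl fun j _ => h1 j, Finset.prod_mul_distrib, sign_prod]
  simp only [smul_eq_mul]
  ring

lemma prod_one_apply {n : ℕ} (u v : QIdx n) :
    ∏ j, (1 : Matrix (Fin 2) (Fin 2) ℂ) (u j) (v j) = (1 : Matrix (QIdx n) (QIdx n) ℂ) u v := by
  by_cases h : u = v
  · subst h; simp [Matrix.one_apply]
  · obtain ⟨j, hj⟩ := Function.ne_iff.mp h
    rw [Matrix.one_apply_ne h]
    exact Finset.prod_eq_zero (Finset.mem_univ j) (Matrix.one_apply_ne hj)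

lemma Weyl_sq {n : ℕ} (q : PhS n) : Weyl q * Weyl q = 1 := by
  ext u v
  rw [Weyl_mul_apply]
  have h1 : ∀ j : Fin n, (W1 (q.1 j) (q.2 j) * W1 (q.1 j) (q.2 j)) (u j) (v j)
      = ((-1:ℂ))^((q.1 j).val * (q.2 j).val) * (1 : Matrix (Fin 2) (Fin 2) ℂ) (u j) (v j) := by
    intro j; rw [sq1]; rfl
  rw [Finset.prod_congr rfl fun j _ => h1 j, Finset.prod_mul_distrib,
    Finset.prod_pow_eq_pow_sum, prod_one_apply, ← mul_assoc, ← pow_add]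
  have : Complex.I ^ ((∑ j, (q.1 j).val * (q.2 j).val) + ∑ j, (q.1 j).val * (q.2 j).val) *
      (-1:ℂ) ^ (∑ j, (q.1 j).val * (q.2 j).val) = 1 := by
    rw [← two_mul, pow_mul, Complex.I_sq]
    rw [← mul_pow]
    norm_num
  rw [this, one_mul]

lemma Weyl_herm {n : ℕ} (q : PhS n) : (Weyl q)ᴴ = Weyl q := by
  ext u v
  rw [Matrix.conjTranspose_apply, Weyl_apply, Weyl_apply]
  rw [Complex.star_def, map_mul, map_pow, Complex.conj_I, map_prod]
  have h1 : ∀ j : Fin n, (starRingEnd ℂ) (W1 (q.1 j) (q.2 j) (v j) (u j))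
      = ((-1:ℂ))^((q.1 j).val * (q.2 j).val) * W1 (q.1 j) (q.2 j) (u j) (v j) := by
    intro j; rw [real1, transp1]
  rw [Finset.prod_congr rfl fun j _ => h1 j, Finset.prod_mul_distrib,
    Finset.prod_pow_eq_pow_sum]
  rw [← mul_assoc]
  congr 1
  norm_num [← mul_pow]

lemma Weyl_trace_mul {n : ℕ} (x y : PhS n) :
    (Weyl x * Weyl y).trace = if x = y then ((2:ℂ))^n else 0 := by
  rw [Matrix.trace]
  simp only [Matrix.diag_apply, Weyl_mul_apply, ← Finset.mul_sum]
  rw [sum_pi_prod (f := fun j c => (W1 (x.1 j) (x.2 j) * W1 (y.1 j) (y.2 j)) c c)]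
  by_cases h : x = y
  · subst h
    rw [Finset.prod_congr rfl fun j (_ : j ∈ Finset.univ) => tr1 (x.1 j) (x.2 j) (x.1 j) (x.2 j)]
    simp only [eq_self_iff_true, and_self, if_true]
    rw [Finset.prod_mul_distrib, Finset.prod_const, Finset.prod_pow_eq_pow_sum]
    simp only [Finset.card_univ, Fintype.card_fin]
    set m := ∑ j, (x.1 j).val * (x.2 j).val with hm
    have hI : Complex.I ^ m * Complex.I ^ m = (-1:ℂ)^m := by
      rw [← pow_add, ← two_mul, pow_mul, Complex.I_sq]
    have h2 : ((-1:ℂ))^m * ((-1:ℂ))^m = 1 := by rw [← mul_pow]; norm_num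
    calc Complex.I ^ m * Complex.I ^ m * ((2:ℂ)^n * (-1:ℂ)^m)
        = (2:ℂ)^n * (((-1:ℂ))^m * ((-1:ℂ))^m) := by rw [hI]; ring
      _ = (2:ℂ)^n := by rw [h2, mul_one]
  · rw [if_neg h]
    have : ∃ j : Fin n, ¬(x.1 j = y.1 j ∧ x.2 j = y.2 j) := by
      by_contra hc
      push_neg at hc
      exact h (Prod.ext (funext fun j => (hc j).1) (funext fun j => (hc j).2))
    obtain ⟨j, hj⟩ := this
    have : ∏ j, (∑ c : Fin 2, (W1 (x.1 j) (x.2 j) * W1 (y.1 j) (y.2 j)) c c) = 0 := by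
      refine Finset.prod_eq_zero (Finset.mem_univ j) ?_
      rw [tr1, if_neg hj]
    rw [this, mul_zero]

lemma Weyl_sum_key {n : ℕ} (t s u v : QIdx n) :
    ∑ x : PhS n, Weyl x t s * Weyl x u v = if t = v ∧ s = u then ((2:ℂ))^n else 0 := by
  have hterm : ∀ x : PhS n, Weyl x t s * Weyl x u v
      = ∏ j, (((-1:ℂ))^((x.1 j).val * (x.2 j).val) *
          (W1 (x.1 j) (x.2 j) (t j) (s j) * W1 (x.1 j) (x.2 j) (u j) (v j))) := by
    intro x
    rw [Weyl_apply, Weyl_apply, Finset.prod_mul_distrib, Finset.prod_mul_distrib,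
      Finset.prod_pow_eq_pow_sum]
    set m := ∑ j, (x.1 j).val * (x.2 j).val
    have hI : Complex.I ^ m * Complex.I ^ m = (-1:ℂ)^m := by
      rw [← pow_add, ← two_mul, pow_mul, Complex.I_sq]
    calc Complex.I ^ m * (∏ j, W1 (x.1 j) (x.2 j) (t j) (s j)) *
          (Complex.I ^ m * ∏ j, W1 (x.1 j) (x.2 j) (u j) (v j))
        = (Complex.I ^ m * Complex.I ^ m) * ((∏ j, W1 (x.1 j) (x.2 j) (t j) (s j)) *
            ∏ j, W1 (x.1 j) (x.2 j) (u j) (v j)) := by ring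
      _ = (-1:ℂ)^m * ((∏ j, W1 (x.1 j) (x.2 j) (t j) (s j)) *
            ∏ j, W1 (x.1 j) (x.2 j) (u j) (v j)) := by rw [hI]
  simp only [hterm]
  rw [Fintype.sum_prod_type]
  have hswap : ∀ a : Fin n → F2,
      ∑ b : Fin n → F2, ∏ j, (((-1:ℂ))^((a j).val * (b j).val) *
          (W1 (a j) (b j) (t j) (s j) * W1 (a j) (b j) (u j) (v j)))
      = ∏ j, ∑ d : F2, (((-1:ℂ))^((a j).val * d.val) *
          (W1 (a j) d (t j) (s j) * W1 (a j) d (u j) (v j))) := by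
    intro a
    exact sum_pi_prod (f := fun j d => ((-1:ℂ))^((a j).val * d.val) *
      (W1 (a j) d (t j) (s j) * W1 (a j) d (u j) (v j)))
  rw [Finset.sum_congr rfl fun a _ => hswap a]
  rw [sum_pi_prod (f := fun j c => ∑ d : F2, (((-1:ℂ))^(c.val * d.val) *
      (W1 c d (t j) (s j) * W1 c d (u j) (v j))))]
  have hj : ∀ j : Fin n, (∑ c : F2, ∑ d : F2, (((-1:ℂ))^(c.val * d.val) *
      (W1 c d (t j) (s j) * W1 c d (u j) (v j))))
      = if t j = v j ∧ s j = u j then 2 else 0 := fun j => complete1 (t j) (s j) (u j) (v j)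
  rw [Finset.prod_congr rfl fun j _ => hj j]
  by_cases h : t = v ∧ s = u
  · rw [if_pos h]
    obtain ⟨h1, h2⟩ := h
    subst h1; subst h2
    simp
  · rw [if_neg h]
    have : ∃ j : Fin n, ¬(t j = v j ∧ s j = u j) := by
      by_contra hc
      push_neg at hc
      exact h ⟨funext fun j => (hc j).1, funext fun j => (hc j).2⟩
    obtain ⟨j, hj2⟩ := this
    exact Finset.prod_eq_zero (Finset.mem_univ j) (by rw [if_neg hj2])

lemma Weyl_complete {n : ℕ} (A : Matrix (QIdx n) (QIdx n) ℂ) :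
    ∑ x : PhS n, (A * Weyl x).trace • Weyl x = ((2:ℂ)^n) • A := by
  ext u v
  simp only [Matrix.sum_apply, Matrix.smul_apply, smul_eq_mul]
  have htr : ∀ x : PhS n, (A * Weyl x).trace = ∑ s, ∑ t', A s t' * Weyl x t' s := by
    intro x
    rw [Matrix.trace]
    exact Finset.sum_congr rfl fun s _ => Matrix.mul_apply
  have hstep : ∀ x : PhS n, (A * Weyl x).trace * Weyl x u v
      = ∑ s, ∑ t', A s t' * (Weyl x t' s * Weyl x u v) := by
    intro x
    rw [htr, Finset.sum_mul]
    refine Finset.sum_congr rfl fun s _ => ?_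
    rw [Finset.sum_mul]
    exact Finset.sum_congr rfl fun t' _ => by ring
  rw [Finset.sum_congr rfl fun x _ => hstep x]
  rw [Finset.sum_comm]
  have : ∀ s, ∑ x : PhS n, ∑ t', A s t' * (Weyl x t' s * Weyl x u v)
      = ∑ t', A s t' * (if t' = v ∧ s = u then ((2:ℂ))^n else 0) := by
    intro s
    rw [Finset.sum_comm]
    refine Finset.sum_congr rfl fun t' _ => ?_
    rw [← Finset.mul_sum, Weyl_sum_key]
  rw [Finset.sum_congr rfl fun s _ => this s]
  simp only [mul_ite, mul_zero]
  have h1 : ∀ s, (∑ t' : QIdx n, if t' = v ∧ s = u then A s t' * 2 ^ n else 0)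
      = if s = u then A s v * 2 ^ n else 0 := by
    intro s
    by_cases hs : s = u
    · simp [hs]
    · simp [hs]
  rw [Finset.sum_congr rfl fun s _ => h1 s]
  simp [mul_comm]

lemma sympl_comm {n : ℕ} (x y : PhS n) : sympl x y = sympl y x := by
  simp only [sympl]
  exact Finset.sum_congr rfl fun j _ => by ring

noncomputable def symplForm (n : ℕ) : LinearMap.BilinForm F2 (PhS n) :=
  LinearMap.mk₂ F2 sympl sympl_add_left sympl_smul_left
    (fun x y z => by rw [sympl_comm, sympl_add_left, sympl_comm y x, sympl_comm z x])
    (fun c x y => by rw [sympl_comm, sympl_smul_left, sympl_comm y x, smul_eq_mul])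

lemma symplForm_apply {n : ℕ} (x y : PhS n) : symplForm n x y = sympl x y := rfl

lemma symplForm_nondeg (n : ℕ) : (symplForm n).Nondegenerate := by
  suffices hL : ∀ x : PhS n, (∀ y, symplForm n x y = 0) → x = 0 from
    ⟨hL, fun y hy => hL y fun x => by rw [symplForm_apply, sympl_comm, ← symplForm_apply]; exact hy x⟩
  intro x hx
  have h1 : ∀ j, x.2 j = 0 := by
    intro j
    have := hx (Pi.single j 1, 0)
    rw [symplForm_apply] at this
    simpa [sympl, Pi.single_apply, mul_ite, Finset.sum_ite_eq'] using this
  have h2 : ∀ j, x.1 j = 0 := by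
    intro j
    have := hx (0, Pi.single j 1)
    rw [symplForm_apply] at this
    simpa [sympl, Pi.single_apply, mul_ite, Finset.sum_ite_eq'] using this
  exact Prod.ext (funext h2) (funext h1)

lemma symplForm_refl (n : ℕ) : (symplForm n).IsRefl := by
  intro x y h
  rwa [symplForm_apply, sympl_comm, ← symplForm_apply]

lemma symplComplement_eq_orthogonal {n : ℕ} (S : Submodule F2 (PhS n)) :
    symplComplement S = (symplForm n).orthogonal S := by
  ext x
  constructor
  · intro hx y hy
    have := hx y hy
    rwa [symplForm_apply, sympl_comm]
  · intro hx y hy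
    have := hx y hy
    rwa [symplForm_apply, sympl_comm] at this

lemma symplComplement_symplComplement {n : ℕ} (S : Submodule F2 (PhS n)) :
    symplComplement (symplComplement S) = S := by
  rw [symplComplement_eq_orthogonal, symplComplement_eq_orthogonal]
  exact LinearMap.BilinForm.orthogonal_orthogonal (symplForm_nondeg n) (symplForm_refl n) S

lemma neg_one_pow_F2_add (a b : F2) :
    ((-1:ℂ))^((a+b).val) = (-1:ℂ)^(a.val) * (-1:ℂ)^(b.val) := by
  rcases F2cases a with rfl|rfl <;> rcases F2cases b with rfl|rfl <;>
    norm_num [val0, val1, show ((1:F2)+1) = 0 by decide, show ((2:F2)).val = 0 by decide]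

lemma char_sum {n : ℕ} (S : Submodule F2 (PhS n)) (x : PhS n) :
    ∑ q ∈ Set.toFinset ((symplComplement S : Set (PhS n))), ((-1:ℂ))^((sympl q x).val)
    = if x ∈ S then (Nat.card (symplComplement S) : ℂ) else 0 := by
  by_cases hx : x ∈ S
  · rw [if_pos hx]
    have : ∀ q ∈ Set.toFinset ((symplComplement S : Set (PhS n))),
        ((-1:ℂ))^((sympl q x).val) = 1 := by
      intro q hq
      rw [Set.mem_toFinset] at hq
      rw [hq x hx, val0, pow_zero]
    rw [Finset.sum_congr rfl this, Finset.sum_const, nsmul_eq_mul, mul_one]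
    congr 1
    rw [Nat.card_eq_fintype_card, Set.toFinset_card]
    exact (Fintype.card_congr (Equiv.refl _)).symm
  · rw [if_neg hx]
    -- obtain q0 in complement with sympl q0 x = 1
    have hx2 : x ∉ symplComplement (symplComplement S) := by
      rwa [symplComplement_symplComplement]
    have : ∃ q0 ∈ symplComplement S, sympl q0 x ≠ 0 := by
      by_contra hc
      push_neg at hc
      exact hx2 (fun q hq => by rw [sympl_comm]; exact hc q hq)
    obtain ⟨q0, hq0T, hq0⟩ := this
    have hq0' : sympl q0 x = 1 := by
      rcases F2cases (sympl q0 x) with h|h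
      · exact absurd h hq0
      · exact h
    have key : ∑ q ∈ Set.toFinset ((symplComplement S : Set (PhS n))), ((-1:ℂ))^((sympl q x).val)
        = ∑ q ∈ Set.toFinset ((symplComplement S : Set (PhS n))), ((-1:ℂ))^((sympl (q0 + q) x).val) := by
      refine Finset.sum_nbij' (fun q => q0 + q) (fun q => q0 + q) ?_ ?_ ?_ ?_ ?_
      · intro q hq
        rw [Set.mem_toFinset] at hq ⊢
        exact (symplComplement S).add_mem hq0T hq
      · intro q hq
        rw [Set.mem_toFinset] at hq ⊢
        exact (symplComplement S).add_mem hq0T hq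
      · intro q _
        show q0 + (q0 + q) = q
        rw [← add_assoc, ← two_smul F2 q0]
        rw [show ((2:F2)) = 0 by decide, zero_smul, zero_add]
      · intro q _
        show q0 + (q0 + q) = q
        rw [← add_assoc, ← two_smul F2 q0]
        rw [show ((2:F2)) = 0 by decide, zero_smul, zero_add]
      · intro q _
        show ((-1:ℂ))^((sympl q x).val) = ((-1:ℂ))^((sympl (q0 + (q0 + q)) x).val)
        rw [← add_assoc, ← two_smul F2 q0]
        rw [show ((2:F2)) = 0 by decide, zero_smul, zero_add]
    have key2 : ∀ q : PhS n, ((-1:ℂ))^((sympl (q0 + q) x).val) = - ((-1:ℂ))^((sympl q x).val) := by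
      intro q
      rw [sympl_add_left, neg_one_pow_F2_add, hq0', val1, pow_one]
      ring
    rw [Finset.sum_congr rfl (fun q _ => key2 q), Finset.sum_neg_distrib] at key
    have h2 : (∑ q ∈ Set.toFinset ((symplComplement S : Set (PhS n))), ((-1:ℂ))^((sympl q x).val))
        + ∑ q ∈ Set.toFinset ((symplComplement S : Set (PhS n))), ((-1:ℂ))^((sympl q x).val) = 0 := by
      nth_rewrite 1 [key]; ring
    rw [← two_mul] at h2
    exact (mul_eq_zero.mp h2).resolve_left two_ne_zero

lemma Weyl_conj {n : ℕ} (q x : PhS n) :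
    Weyl q * Weyl x * Weyl q = ((-1:ℂ))^((sympl q x).val) • Weyl x := by
  rw [Weyl_comm, Matrix.smul_mul, mul_assoc, Weyl_sq, mul_one]

theorem stmt5 (n : ℕ) (S : Submodule F2 (PhS n)) (A : Matrix (QIdx n) (QIdx n) ℂ) :
    pauliProj (S : Set (PhS n)) A =
      (Nat.card (symplComplement S) : ℂ)⁻¹ •
        ∑ᶠ q ∈ (symplComplement S : Set (PhS n)), Weyl q * A * (Weyl q)ᴴ := by
  have hA : A = (2^n:ℂ)⁻¹ • ∑ x : PhS n, (A * Weyl x).trace • Weyl x := by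
    rw [Weyl_complete, smul_smul, inv_mul_cancel₀ (pow_ne_zero n two_ne_zero), one_smul]
  have hcard : (Nat.card (symplComplement S) : ℂ) ≠ 0 := by
    have h0 : 0 < Nat.card (symplComplement S) := Nat.card_pos
    exact_mod_cast h0.ne'
  have hproj : pauliProj (S : Set (PhS n)) A
      = (2^n:ℂ)⁻¹ • ∑ x ∈ Set.toFinset ((S : Set (PhS n))), (A * Weyl x).trace • Weyl x := by
    rw [pauliProj]
    congr 1
    conv_lhs => rw [← Set.coe_toFinset ((S : Set (PhS n)))]
    rw [finsum_mem_coe_finset]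
  have key : ∑ᶠ q ∈ (symplComplement S : Set (PhS n)), Weyl q * A * (Weyl q)ᴴ
      = (Nat.card (symplComplement S) : ℂ) • pauliProj (S : Set (PhS n)) A := by
    rw [← Set.coe_toFinset ((symplComplement S : Set (PhS n))), finsum_mem_coe_finset]
    have hterm : ∀ q : PhS n, Weyl q * A * (Weyl q)ᴴ
        = (2^n:ℂ)⁻¹ • ∑ x : PhS n,
            (((-1:ℂ))^((sympl q x).val) * (A * Weyl x).trace) • Weyl x := by
      intro q
      rw [Weyl_herm]
      conv_lhs => rw [hA]
      rw [Matrix.mul_smul, Matrix.smul_mul]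
      congr 1
      rw [Matrix.mul_sum, Matrix.sum_mul]
      refine Finset.sum_congr rfl fun x _ => ?_
      rw [Matrix.mul_smul, Matrix.smul_mul, Weyl_conj, smul_smul, mul_comm ((A * Weyl x).trace)]
    rw [Finset.sum_congr rfl fun q _ => hterm q, ← Finset.smul_sum, Finset.sum_comm]
    have h2 : ∀ x : PhS n,
        ∑ q ∈ Set.toFinset ((symplComplement S : Set (PhS n))),
          (((-1:ℂ))^((sympl q x).val) * (A * Weyl x).trace) • Weyl x
        = ((if x ∈ S then (Nat.card (symplComplement S) : ℂ) else 0) * (A * Weyl x).trace) • Weyl x := by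
      intro x
      rw [← Finset.sum_smul, ← Finset.sum_mul, char_sum]
    rw [Finset.sum_congr rfl fun x _ => h2 x]
    have h3 : ∀ x : PhS n,
        ((if x ∈ S then (Nat.card (symplComplement S) : ℂ) else 0) * (A * Weyl x).trace) • Weyl x
        = if x ∈ Set.toFinset ((S : Set (PhS n))) then
            ((Nat.card (symplComplement S) : ℂ) • ((A * Weyl x).trace • Weyl x)) else 0 := by
      intro x
      by_cases hx : x ∈ S
      · rw [if_pos hx, if_pos (by rwa [Set.mem_toFinset]), smul_smul]
      · rw [if_neg hx, if_neg (by rwa [Set.mem_toFinset]), zero_mul, zero_smul]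
    rw [Finset.sum_congr rfl fun x _ => h3 x, Finset.sum_ite_mem, Finset.univ_inter,
      ← Finset.smul_sum, smul_comm]
    rw [hproj]
  rw [key, smul_smul, inv_mul_cancel₀ hcard, one_smul]

end PauliSpec
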